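/- arXiv:2304.06498 — 2 statements merged into one kernel-verified Lean document; each statement's English description precedes it below -/
import Mathlib

section
/- If z is exceptional, x ⪰ z, and x ≠ z (as sorted vectors), then B(x) > m(z). Consequently, for any move x → x' to an exceptional position x', one has B(x) = m(x') + 1. -/
/-- `z` is a basic position with parameter `b`: coordinate sum `k*b`, all coordinates
at most `b`, all coordinates even if `b` is even, exactly one even if `b` is odd. -/
def IsBasic (k : ℕ) (z : Fin (k+1) → ℕ) (b : ℕ) : Prop :=
  (∑ i, z i) = k * b ∧ (∀ i, z i ≤ b) ∧
    (Even b → ∀ i, Even (z i)) ∧ (Odd b → ∃! i, Even (z i))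

/-- `Pre k y x` means `y ⪯ x`: the sorted vector of `y` is componentwise ≤ that of `x`. -/
def Pre (k : ℕ) (y x : Fin (k+1) → ℕ) : Prop :=
  ∀ i, (y ∘ Tuple.sort y) i ≤ (x ∘ Tuple.sort x) i

/-- `BVal k x = max { b : some basic z with parameter b satisfies z ⪯ x }`. -/
noncomputable def BVal (k : ℕ) (x : Fin (k+1) → ℕ) : ℕ :=
  sSup {b | ∃ z, IsBasic k z b ∧ Pre k z x}

/-- A move in NIM(k+1,k): keep coordinate `i`, decrease every other (positive) coordinate by 1. -/
def MoveK (k : ℕ) (x y : Fin (k+1) → ℕ) : Prop :=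
  ∃ i, (∀ j, j ≠ i → 0 < x j) ∧ ∀ j, y j = if j = i then x j else x j - 1

/-- The M-move: keep a smallest even coordinate if one exists, otherwise keep a
largest coordinate; decrease the other k (positive) coordinates by 1. -/
def MMove (k : ℕ) (x y : Fin (k+1) → ℕ) : Prop :=
  ∃ i, (∀ j, j ≠ i → 0 < x j) ∧
    ((∃ j, Even (x j)) → Even (x i) ∧ ∀ j, Even (x j) → x i ≤ x j) ∧
    ((∀ j, Odd (x j)) → ∀ j, x j ≤ x i) ∧
    (∀ j, y j = if j = i then x j else x j - 1)

/-- Exceptional position: all coordinates odd, all `< m`, and `|x| = k*m + k - 1`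
for some even `m`. -/
def Exceptional (k : ℕ) (x : Fin (k+1) → ℕ) : Prop :=
  ∃ m, Even m ∧ (∀ i, Odd (x i)) ∧ (∀ i, x i < m) ∧ (∑ i, x i) = k * m + k - 1

/-- `MVal k x m`: playing the M-rule from `x`, the game ends after exactly `m` moves. -/
inductive MVal (k : ℕ) : (Fin (k+1) → ℕ) → ℕ → Prop
  | zero (x) : (¬ ∃ y, MoveK k x y) → MVal k x 0
  | succ (x y m) : MMove k x y → MVal k y m → MVal k x (m + 1)

lemma sorted_le_sorted {n : ℕ} (f g : Fin n → ℕ) (h : ∀ i, f i ≤ g i) (j : Fin n) :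
    (f ∘ Tuple.sort f) j ≤ (g ∘ Tuple.sort g) j := by
  set F := f ∘ Tuple.sort f with hF'
  set G := g ∘ Tuple.sort g with hG'
  have hF : Monotone F := Tuple.monotone_sort f
  have hG : Monotone G := Tuple.monotone_sort g
  have h1 : (j : ℕ) < Fintype.card {i // G i ≤ G j} :=
    by rw [Fintype.card_subtype]; exact (Tuple.lt_card_le_iff_apply_le_of_monotone (a := G j) (j := j) hG).mpr le_rfl
  have e1 : Fintype.card {i // G i ≤ G j} = Fintype.card {i // g i ≤ G j} :=
    Fintype.card_congr ((Tuple.sort g).subtypeEquiv (fun i => Iff.rfl))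
  have e2 : Fintype.card {i // g i ≤ G j} ≤ Fintype.card {i // f i ≤ G j} :=
    Fintype.card_subtype_mono _ _ (fun i hi => le_trans (h i) hi)
  have e3 : Fintype.card {i // f i ≤ G j} = Fintype.card {i // F i ≤ G j} :=
    (Fintype.card_congr ((Tuple.sort f).subtypeEquiv (fun i => Iff.rfl))).symm
  have h2 : (j : ℕ) < Fintype.card {i // F i ≤ G j} := by omega
  rw [Fintype.card_subtype] at h2
  exact (Tuple.lt_card_le_iff_apply_le_of_monotone (a := G j) (j := j) hF).mp h2

lemma sum_sorted {n : ℕ} (f : Fin n → ℕ) : (∑ i, (f ∘ Tuple.sort f) i) = ∑ i, f i :=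
  Equiv.sum_comp (Tuple.sort f) f

lemma bdd_bval (k : ℕ) (hk : 2 ≤ k) (x : Fin (k+1) → ℕ) :
    BddAbove {b | ∃ z, IsBasic k z b ∧ Pre k z x} := by
  refine ⟨∑ i, x i, fun b hb => ?_⟩
  obtain ⟨w, ⟨hsum, -, -, -⟩, hpre⟩ := hb
  have h1 : (∑ i, (w ∘ Tuple.sort w) i) ≤ ∑ i, (x ∘ Tuple.sort x) i :=
    Finset.sum_le_sum (fun i _ => hpre i)
  rw [sum_sorted, sum_sorted, hsum] at h1
  calc b ≤ k * b := Nat.le_mul_of_pos_left b (by omega)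
    _ ≤ _ := h1

lemma part1 (k : ℕ) (hk : 2 ≤ k) (x z : Fin (k+1) → ℕ) (m : ℕ) (hm : Even m)
    (hodd : ∀ i, Odd (z i)) (hlt : ∀ i, z i < m) (hsum : (∑ i, z i) = k * m + k - 1)
    (hzx : Pre k z x) (hxz : ¬ Pre k x z) : m < BVal k x := by
  set Z := z ∘ Tuple.sort z with hZ'
  set X := x ∘ Tuple.sort x with hX'
  have hZmono : Monotone Z := Tuple.monotone_sort z
  have hXmono : Monotone X := Tuple.monotone_sort x
  have hZodd : ∀ i, Odd (Z i) := fun i => hodd _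
  have hZlt : ∀ i, Z i < m := fun i => hlt _
  have hZsum : (∑ i, Z i) = k * m + k - 1 := by rw [hZ', sum_sorted, hsum]
  -- index with strict inequality
  simp only [Pre, not_forall] at hxz
  obtain ⟨i1, hi1⟩ := hxz
  have hi1' : Z i1 < X i1 := lt_of_not_ge hi1
  set T : Finset (Fin (k+1)) := Finset.univ.filter (fun i => Z i < X i) with hT'
  have hTne : T.Nonempty := ⟨i1, by simp [hT', hi1']⟩
  set i0 := T.max' hTne with hi0'
  have hi0mem : Z i0 < X i0 := by
    have := T.max'_mem hTne
    simpa [hT'] using this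
  have key : ∀ j, i0 < j → Z i0 < Z j := by
    intro j hj
    by_contra hle
    have h1 : Z i0 ≤ Z j := hZmono hj.le
    have h2 : Z j = Z i0 := le_antisymm (not_lt.mp hle) h1
    have h3 : Z j < X j := by
      calc Z j = Z i0 := h2
        _ < X i0 := hi0mem
        _ ≤ X j := hXmono hj.le
    have : j ∈ T := by simp [hT', h3]
    exact absurd (T.le_max' j this) (not_le.mpr hj)
  -- bumped vector
  set w : Fin (k+1) → ℕ := fun j => if j = i0 then Z i0 + 1 else Z j with hw'
  have hwa : ∀ j, w j = if j = i0 then Z i0 + 1 else Z j := fun j => rfl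
  have hwmono : Monotone w := by
    intro a b hab
    rw [hwa a, hwa b]
    by_cases ha : a = i0 <;> by_cases hb : b = i0
    · rw [if_pos ha, if_pos hb]
    · rw [if_pos ha, if_neg hb]
      exact key b (lt_of_le_of_ne (ha ▸ hab) (Ne.symm hb))
    · rw [if_neg ha, if_pos hb]
      exact le_trans (hZmono (hb ▸ hab)) (Nat.le_succ _)
    · rw [if_neg ha, if_neg hb]; exact hZmono hab
  have hwsort : w ∘ Tuple.sort w = w := by
    rw [Tuple.sort_eq_refl_iff_monotone.mpr hwmono]; rfl
  have hwsum : (∑ i, w i) = k * (m + 1) := by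
    have h1 : (∑ i, w i) = (∑ i, Z i) + 1 := by
      have hupd : w = Function.update Z i0 (Z i0 + 1) := by
        funext j
        rw [Function.update_apply, hwa j]
      rw [hupd, Finset.sum_update_of_mem (Finset.mem_univ i0)]
      rw [← Finset.add_sum_erase Finset.univ Z (Finset.mem_univ i0), Finset.erase_eq]
      omega
    rw [h1, hZsum, Nat.mul_succ]
    have : 1 ≤ k * m + k := by nlinarith
    omega
  have hbasic : IsBasic k w (m + 1) := by
    refine ⟨hwsum, ?_, ?_, ?_⟩
    · intro j
      rw [hwa j]
      by_cases hj : j = i0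
      · rw [if_pos hj]; exact Nat.succ_le_succ (hZlt i0).le
      · rw [if_neg hj]; exact le_trans (hZlt j).le (Nat.le_succ m)
    · intro h
      exact absurd hm (by simpa [Nat.even_add_one] using h)
    · intro _
      refine ⟨i0, ?_, ?_⟩
      · show Even (w i0)
        rw [hwa i0, if_pos rfl]
        exact (hZodd i0).add_one
      · intro j hj
        by_contra hne
        rw [hwa j, if_neg hne] at hj
        exact (Nat.not_even_iff_odd.mpr (hZodd j)) hj
  have hpre : Pre k w x := by
    intro j
    rw [hwsort, hwa j]
    by_cases hj : j = i0
    · rw [if_pos hj, hj]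
      exact hi0mem
    · rw [if_neg hj]; exact hzx j
  have hmem : m + 1 ∈ {b | ∃ z, IsBasic k z b ∧ Pre k z x} := ⟨w, hbasic, hpre⟩
  exact lt_of_lt_of_le (Nat.lt_succ_self m) (le_csSup (bdd_bval k hk x) hmem)

lemma part2 (k : ℕ) (hk : 2 ≤ k) (x x' : Fin (k+1) → ℕ) (m' : ℕ)
    (hmove : MoveK k x x')
    (hm' : Even m') (hodd : ∀ i, Odd (x' i)) (hlt : ∀ i, x' i < m')
    (hsum : (∑ i, x' i) = k * m' + k - 1) : BVal k x = m' + 1 := by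
  obtain ⟨i, hpos, hx'⟩ := hmove
  have hle : ∀ j, x' j ≤ x j := by intro j; rw [hx' j]; split <;> omega
  have hxeq : ∀ j, j ≠ i → x j = x' j + 1 := by
    intro j hj; rw [hx' j, if_neg hj]; have := hpos j hj; omega
  have hsumx : (∑ j, x j) = (∑ j, x' j) + k := by
    rw [← Finset.add_sum_erase Finset.univ x (Finset.mem_univ i),
        ← Finset.add_sum_erase Finset.univ x' (Finset.mem_univ i)]
    have h1 : (∑ j ∈ Finset.univ.erase i, x j) = ∑ j ∈ Finset.univ.erase i, (x' j + 1) :=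
      Finset.sum_congr rfl (fun j hj => hxeq j (Finset.ne_of_mem_erase hj))
    have h2 : x' i = x i := by rw [hx' i, if_pos rfl]
    have h3 : (Finset.univ.erase i).card = k := by
      rw [Finset.card_erase_of_mem (Finset.mem_univ i), Finset.card_univ, Fintype.card_fin]
      omega
    rw [h1, Finset.sum_add_distrib, Finset.sum_const, h3, smul_eq_mul, mul_one, h2]
    omega
  have hprex : Pre k x' x := fun j => sorted_le_sorted x' x hle j
  have hnpre : ¬ Pre k x x' := by
    intro hpre
    have h1 : (∑ j, (x ∘ Tuple.sort x) j) ≤ ∑ j, (x' ∘ Tuple.sort x') j :=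
      Finset.sum_le_sum (fun j _ => hpre j)
    rw [sum_sorted, sum_sorted, hsumx] at h1
    omega
  have hlow := part1 k hk x x' m' hm' hodd hlt hsum hprex hnpre
  have hup : BVal k x ≤ m' + 1 := by
    have hne : {b | ∃ z, IsBasic k z b ∧ Pre k z x}.Nonempty := by
      by_contra h
      rw [Set.not_nonempty_iff_eq_empty] at h
      unfold BVal at hlow
      rw [h, csSup_empty] at hlow
      simp at hlow
    unfold BVal
    refine csSup_le hne ?_
    rintro b ⟨w, ⟨hws, -, -, -⟩, hwpre⟩
    have h1 : (∑ j, (w ∘ Tuple.sort w) j) ≤ ∑ j, (x ∘ Tuple.sort x) j :=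
      Finset.sum_le_sum (fun j _ => hwpre j)
    rw [sum_sorted, sum_sorted, hws, hsumx, hsum] at h1
    by_contra hb
    have hb2 : m' + 2 ≤ b := by omega
    have hb3 := Nat.mul_le_mul_left k hb2
    have hk2 : k * (m' + 2) = k * m' + 2 * k := by ring
    omega
  omega

theorem stmt12 (k : ℕ) (hk : 2 ≤ k) :
    (∀ (x z : Fin (k+1) → ℕ) (m : ℕ), Even m → (∀ i, Odd (z i)) →
      (∀ i, z i < m) → (∑ i, z i) = k * m + k - 1 →
      Pre k z x → ¬ Pre k x z → m < BVal k x) ∧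
    (∀ (x x' : Fin (k+1) → ℕ) (m' : ℕ), MoveK k x x' → Even m' →
      (∀ i, Odd (x' i)) → (∀ i, x' i < m') → (∑ i, x' i) = k * m' + k - 1 →
      BVal k x = m' + 1) := by
  refine ⟨fun x z m hm hodd hlt hsum hzx hxz => part1 k hk x z m hm hodd hlt hsum hzx hxz,
    fun x x' m' hmove hm' hodd hlt hsum => part2 k hk x x' m' hmove hm' hodd hlt hsum⟩
end

section
/- If x → x' is the M-move from a position x with B(x) even and B(x) > 0, then B(x') = B(x) − 1. -/
lemma sortedLE {n : ℕ} {y x : Fin n → ℕ} (h : ∀ i, y i ≤ x i) (i : Fin n) :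
    (y ∘ Tuple.sort y) i ≤ (x ∘ Tuple.sort x) i := by
  classical
  set U : Finset (Fin n) := (Finset.Ici i).image (Tuple.sort y) with hUdef
  set W : Finset (Fin n) := (Finset.Iic i).image (Tuple.sort x) with hWdef
  have hU : U.card = n - i.val := by
    rw [hUdef, Finset.card_image_of_injective _ (Tuple.sort y).injective, Fin.card_Ici]
  have hW : W.card = i.val + 1 := by
    rw [hWdef, Finset.card_image_of_injective _ (Tuple.sort x).injective, Fin.card_Iic]
  have h1 := Finset.card_inter_add_card_union U W
  have h2 : (U ∪ W).card ≤ n := by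
    have := Finset.card_le_card (Finset.subset_univ (U ∪ W))
    simpa using this
  have hlt : i.val < n := i.isLt
  have hne : (U ∩ W).Nonempty := by
    rw [← Finset.card_pos]; omega
  obtain ⟨m, hm⟩ := hne
  obtain ⟨hmU, hmW⟩ := Finset.mem_inter.mp hm
  obtain ⟨a, ha, ham⟩ := Finset.mem_image.mp hmU
  obtain ⟨c, hc, hcm⟩ := Finset.mem_image.mp hmW
  calc (y ∘ Tuple.sort y) i ≤ (y ∘ Tuple.sort y) a :=
        Tuple.monotone_sort y (Finset.mem_Ici.mp ha)
    _ = y m := by simp [Function.comp, ham]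
    _ ≤ x m := h m
    _ = (x ∘ Tuple.sort x) c := by simp [Function.comp, hcm]
    _ ≤ (x ∘ Tuple.sort x) i := Tuple.monotone_sort x (Finset.mem_Iic.mp hc)

lemma pre_of_le {k : ℕ} {y x : Fin (k+1) → ℕ} (h : ∀ i, y i ≤ x i) : Pre k y x :=
  fun i => sortedLE h i

lemma pre_trans_le {k : ℕ} {z x' x : Fin (k+1) → ℕ} (hz : Pre k z x')
    (h : ∀ i, x' i ≤ x i) : Pre k z x :=
  fun i => le_trans (hz i) (sortedLE h i)

lemma exists_aligned {k : ℕ} {z x : Fin (k+1) → ℕ} (h : Pre k z x) :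
    ∃ σ : Equiv.Perm (Fin (k+1)), ∀ i, z (σ i) ≤ x i := by
  refine ⟨(Tuple.sort x).symm.trans (Tuple.sort z), fun i => ?_⟩
  have := h ((Tuple.sort x).symm i)
  simpa [Function.comp] using this

lemma isBasic_comp {k b : ℕ} {z : Fin (k+1) → ℕ} (σ : Equiv.Perm (Fin (k+1)))
    (h : IsBasic k z b) : IsBasic k (fun i => z (σ i)) b := by
  obtain ⟨hs, hb, he, ho⟩ := h
  refine ⟨?_, fun i => hb _, fun hev i => he hev _, fun hodd => ?_⟩
  · rw [Equiv.sum_comp σ z]; exact hs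
  · obtain ⟨i₀, hi₀, hu⟩ := ho hodd
    refine ⟨σ.symm i₀, by simpa using hi₀, fun m hm => ?_⟩
    have h1 : σ m = i₀ := hu (σ m) hm
    rw [← h1]; simp

lemma zero_mem_S (k : ℕ) (x : Fin (k+1) → ℕ) :
    0 ∈ {b | ∃ z, IsBasic k z b ∧ Pre k z x} := by
  refine ⟨fun _ => 0, ⟨by simp, fun i => le_refl 0, fun _ _ => Even.zero,
    fun hodd => absurd hodd (by simp [Nat.odd_iff])⟩, pre_of_le (fun i => Nat.zero_le _)⟩

lemma bddAbove_S (k : ℕ) (hk : 1 ≤ k) (x : Fin (k+1) → ℕ) :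
    BddAbove {b | ∃ z, IsBasic k z b ∧ Pre k z x} := by
  refine ⟨∑ i, x i, fun b hb => ?_⟩
  obtain ⟨z, ⟨hs, _, _, _⟩, hp⟩ := hb
  have h1 : ∑ i, z i ≤ ∑ i, x i := by
    have h2 : ∑ i, (z ∘ Tuple.sort z) i ≤ ∑ i, (x ∘ Tuple.sort x) i :=
      Finset.sum_le_sum (fun i _ => hp i)
    simpa [Function.comp, Equiv.sum_comp] using h2
  have h3 : k * b ≤ ∑ i, x i := hs ▸ h1
  have h4 : 1 * b ≤ k * b := Nat.mul_le_mul_right b hk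
  linarith

lemma sum_shift {n : ℕ} (p : Fin (n+1)) {f g : Fin (n+1) → ℕ}
    (hp : g p = f p) (h : ∀ m, m ≠ p → g m = f m + 1) :
    ∑ m, g m = (∑ m, f m) + n := by
  classical
  rw [← Finset.add_sum_erase _ g (Finset.mem_univ p),
      ← Finset.add_sum_erase _ f (Finset.mem_univ p)]
  have h1 : ∑ m ∈ Finset.univ.erase p, g m = ∑ m ∈ Finset.univ.erase p, (f m + 1) :=
    Finset.sum_congr rfl (fun m hm => h m (Finset.ne_of_mem_erase hm))
  have hc : (Finset.univ.erase p).card = n := by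
    rw [Finset.card_erase_of_mem (Finset.mem_univ p)]; simp
  rw [h1, Finset.sum_add_distrib, Finset.sum_const, hc, hp, smul_eq_mul]
  omega

theorem stmt15 (k : ℕ) (hk : 2 ≤ k) (x x' : Fin (k+1) → ℕ)
    (heven : Even (BVal k x)) (hpos : 0 < BVal k x) (h : MMove k x x') :
    BVal k x' = BVal k x - 1 := by
  classical
  obtain ⟨i, hipos, hAmin, hBmax, hx'⟩ := h
  have hk1 : 1 ≤ k := by omega
  have hbddS := bddAbove_S k hk1 x
  have hbddS' := bddAbove_S k hk1 x'
  set b := BVal k x with hbdef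
  have hb_mem : b ∈ {c | ∃ z, IsBasic k z c ∧ Pre k z x} :=
    Nat.sSup_mem ⟨0, zero_mem_S k x⟩ hbddS
  have hb2 : 2 ≤ b := by
    obtain ⟨r, hr⟩ := heven; omega
  obtain ⟨z0, hz0basic, hz0pre⟩ := hb_mem
  obtain ⟨σ, hσ⟩ := exists_aligned hz0pre
  set w : Fin (k+1) → ℕ := fun m => z0 (σ m) with hwdef
  have hwbasic : IsBasic k w b := isBasic_comp σ hz0basic
  obtain ⟨hwsum, hwle, hweven', -⟩ := hwbasic
  have hweven : ∀ m, Even (w m) := hweven' heven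
  have hwx : ∀ m, w m ≤ x m := hσ
  have hx'le : ∀ m, x' m ≤ x m := by
    intro m; rw [hx' m]; split <;> omega
  have hx'succ : ∀ m, m ≠ i → x' m + 1 = x m := by
    intro m hm; rw [hx' m, if_neg hm]
    have := hipos m hm; omega
  -- find the coordinate p to keep in the basic witness for x'
  have key : ∃ p, (∀ m, m ≠ p → 1 ≤ w m) ∧ w p < b ∧ (p = i ∨ w p < x p) := by
    by_cases hz : ∃ j₀, w j₀ = 0
    · obtain ⟨j₀, hj₀⟩ := hz
      refine ⟨j₀, ?_, by omega, ?_⟩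
      · intro m hm
        by_contra hm1
        have hm0 : w m = 0 := by omega
        have hmem : m ∈ Finset.univ.erase j₀ := Finset.mem_erase.mpr ⟨hm, Finset.mem_univ m⟩
        have hsum_le : ∑ a, w a ≤ (k-1) * b := by
          rw [← Finset.add_sum_erase _ w (Finset.mem_univ j₀), hj₀,
              ← Finset.add_sum_erase _ w hmem, hm0]
          have hle : ∑ a ∈ (Finset.univ.erase j₀).erase m, w a
              ≤ ∑ _a ∈ (Finset.univ.erase j₀).erase m, b :=
            Finset.sum_le_sum (fun a _ => hwle a)
          have hc : ((Finset.univ.erase j₀).erase m).card = k - 1 := by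
            rw [Finset.card_erase_of_mem hmem,
                Finset.card_erase_of_mem (Finset.mem_univ j₀)]
            simp
          rw [Finset.sum_const, hc, smul_eq_mul] at hle
          simpa using hle
        rw [hwsum] at hsum_le
        have hlt : (k-1) * b < k * b :=
          Nat.mul_lt_mul_of_lt_of_le (by omega) (le_refl b) (by omega)
        exact absurd (lt_of_le_of_lt hsum_le hlt) (lt_irrefl _)
      · by_cases hji : j₀ = i
        · exact Or.inl hji
        · exact Or.inr (by rw [hj₀]; exact hipos j₀ hji)
    · push_neg at hz
      have hz1 : ∀ m, 1 ≤ w m := fun m => Nat.one_le_iff_ne_zero.mpr (hz m)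
      by_cases hwi : w i < b
      · exact ⟨i, fun m _ => hz1 m, hwi, Or.inl rfl⟩
      · have hwib : w i = b := le_antisymm (hwle i) (not_lt.mp hwi)
        have hexj : ∃ j, j ≠ i ∧ w j < b := by
          by_contra hcon
          push_neg at hcon
          have h1 : ∑ _j ∈ Finset.univ.erase i, b ≤ ∑ j ∈ Finset.univ.erase i, w j :=
            Finset.sum_le_sum (fun j hj => hcon j (Finset.ne_of_mem_erase hj))
          have hc : (Finset.univ.erase i).card = k := by
            rw [Finset.card_erase_of_mem (Finset.mem_univ i)]; simp
          rw [Finset.sum_const, hc, smul_eq_mul] at h1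
          have h2 : ∑ m, w m = w i + ∑ j ∈ Finset.univ.erase i, w j :=
            (Finset.add_sum_erase _ w (Finset.mem_univ i)).symm
          rw [hwsum, hwib] at h2
          linarith
        obtain ⟨j, hji, hjb⟩ := hexj
        refine ⟨j, fun m _ => hz1 m, hjb, Or.inr ?_⟩
        rcases lt_or_eq_of_le (hwx j) with hlt | heq
        · exact hlt
        · exfalso
          rcases em (∃ m, Even (x m)) with hex | hnex
          · obtain ⟨hxie, hximin⟩ := hAmin hex
            have hxje : Even (x j) := heq ▸ hweven j
            have h3 := hximin j hxje
            have hbxi : b ≤ x i := hwib ▸ hwx i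
            omega
          · have : Odd (x j) := by
              rcases Nat.even_or_odd (x j) with he | ho
              · exact absurd ⟨j, he⟩ hnex
              · exact ho
            rw [← heq] at this
            exact (Nat.not_odd_iff_even.mpr (hweven j)) this
  obtain ⟨p, hp1, hp2, hp3⟩ := key
  set z₁ : Fin (k+1) → ℕ := fun m => if m = p then w p else w m - 1 with hz₁
  have hz₁p : z₁ p = w p := by simp [hz₁]
  have hz₁m : ∀ m, m ≠ p → z₁ m = w m - 1 := fun m hm => by simp [hz₁, hm]
  have hz₁sum : ∑ m, z₁ m = k * (b-1) := by
    have hs : ∑ m, w m = (∑ m, z₁ m) + k := by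
      apply sum_shift p hz₁p.symm
      intro m hm
      rw [hz₁m m hm]
      have := hp1 m hm; omega
    rw [hwsum] at hs
    have hmul : k * (b-1) + k = k * b := by
      have hb1 : (b - 1) + 1 = b := by omega
      calc k*(b-1) + k = k * ((b-1)+1) := by ring
        _ = k * b := by rw [hb1]
    linarith
  have hz₁basic : IsBasic k z₁ (b-1) := by
    have hodd1 : Odd (b-1) := Nat.Even.sub_odd (by omega) heven odd_one
    refine ⟨hz₁sum, ?_, ?_, ?_⟩
    · intro m; by_cases hm : m = p
      · rw [hm, hz₁p]; omega
      · rw [hz₁m m hm]; have := hwle m; omega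
    · intro hev
      exact absurd hodd1 (Nat.not_odd_iff_even.mpr hev)
    · intro _
      refine ⟨p, ?_, fun m hm => ?_⟩
      · show Even (z₁ p)
        rw [hz₁p]; exact hweven p
      · by_contra hmp
        have hm' : Even (z₁ m) := hm
        rw [hz₁m m hmp] at hm'
        have hodd : Odd (w m - 1) := Nat.Even.sub_odd (hp1 m hmp) (hweven m) odd_one
        exact (Nat.not_odd_iff_even.mpr hm') hodd
  have hz₁le : ∀ m, z₁ m ≤ x' m := by
    intro m
    by_cases hm : m = p
    · rw [hm, hz₁p, hx' p]
      by_cases hpi : p = i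
      · rw [if_pos hpi]; exact hwx p
      · rw [if_neg hpi]
        rcases hp3 with h' | h'
        · exact absurd h' hpi
        · omega
    · rw [hz₁m m hm, hx' m]
      have := hwx m
      split <;> omega
  have hpart1 : b - 1 ≤ BVal k x' :=
    le_csSup hbddS' ⟨z₁, hz₁basic, pre_of_le hz₁le⟩
  have hb'mem : BVal k x' ∈ {c | ∃ z, IsBasic k z c ∧ Pre k z x'} :=
    Nat.sSup_mem ⟨0, zero_mem_S k x'⟩ hbddS'
  obtain ⟨z', hz'b, hz'p⟩ := hb'mem
  have hb'le : BVal k x' ≤ b :=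
    le_csSup hbddS ⟨z', hz'b, pre_trans_le hz'p hx'le⟩
  have hb'ne : BVal k x' ≠ b := by
    intro hEq
    rw [hEq] at hz'b
    obtain ⟨τ, hτ⟩ := exists_aligned hz'p
    set w' : Fin (k+1) → ℕ := fun m => z' (τ m) with hw'
    have hw'basic : IsBasic k w' b := isBasic_comp τ hz'b
    obtain ⟨hw's, hw'le, hw'ev', -⟩ := hw'basic
    have hw'ev : ∀ m, Even (w' m) := hw'ev' heven
    set z₂ : Fin (k+1) → ℕ := fun m => if m = i then w' i else w' m + 1 with hz₂
    have hz₂i : z₂ i = w' i := by simp [hz₂]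
    have hz₂m : ∀ m, m ≠ i → z₂ m = w' m + 1 := fun m hm => by simp [hz₂, hm]
    have hz₂sum : ∑ m, z₂ m = k * (b+1) := by
      have hs : ∑ m, z₂ m = (∑ m, w' m) + k := sum_shift i hz₂i (fun m hm => hz₂m m hm)
      rw [hs, hw's, Nat.mul_succ]
    have hz₂basic : IsBasic k z₂ (b+1) := by
      refine ⟨hz₂sum, ?_, ?_, ?_⟩
      · intro m; by_cases hm : m = i
        · rw [hm, hz₂i]; exact le_trans (hw'le i) (Nat.le_succ b)
        · rw [hz₂m m hm]; exact Nat.succ_le_succ (hw'le m)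
      · intro hev
        exact absurd heven (Nat.even_add_one.mp hev)
      · intro _
        refine ⟨i, ?_, fun m hm => ?_⟩
        · show Even (z₂ i)
          rw [hz₂i]; exact hw'ev i
        · by_contra hmi
          have hm' : Even (z₂ m) := hm
          rw [hz₂m m hmi] at hm'
          exact (Nat.even_add_one.mp hm') (hw'ev m)
    have hz₂le : ∀ m, z₂ m ≤ x m := by
      intro m; by_cases hm : m = i
      · rw [hm, hz₂i]; exact le_trans (hτ i) (hx'le i)
      · rw [hz₂m m hm]
        have h1 : w' m ≤ x' m := hτ m
        have h2 : x' m + 1 = x m := hx'succ m hm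
        omega
    have : b + 1 ≤ b := le_csSup hbddS ⟨z₂, hz₂basic, pre_of_le hz₂le⟩
    omega
  omega
end
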